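/- Let H and K be finite groups and suppose that K has no nontrivial homomorphic image isomorphic to a subgroup of H (that is, for every normal subgroup N of K with N ≠ K, the quotient K/N is not isomorphic to any subgroup of H). Then μ(H × K) = μ(H) · μ(K). -/

import Mathlib

open Finset

/-- The Möbius function of the subgroup lattice of a finite group `G`,
evaluated at a pair of subgroups. -/
noncomputable def subgroupMu (G : Type*) [Group G] [Finite G] (H K : Subgroup G) : ℤ :=
  letI : Fintype (Subgroup G) := Fintype.ofFinite _
  letI : DecidableEq (Subgroup G) := Classical.decEq _
  letI : @DecidableRel (Subgroup G) (Subgroup G) (· < ·) := Classical.decRel _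
  letI : @DecidableRel (Subgroup G) (Subgroup G) (· ≤ ·) := Classical.decRel _
  letI := Fintype.toLocallyFiniteOrder (α := Subgroup G)
  IncidenceAlgebra.mu ℤ H K

/-- The Möbius number of a finite group `G`: the value `μ(⊥, ⊤)` of the Möbius
function of its lattice of subgroups. -/
noncomputable def muGrp (G : Type*) [Group G] [Finite G] : ℤ :=
  subgroupMu G ⊥ ⊤

section General
open IncidenceAlgebra

variable {α : Type*} [PartialOrder α] [LocallyFiniteOrder α] [DecidableEq α]

/-- `mu` is invariant under an order embedding whose image is interval-closed. -/
lemma mu_orderEmbedding_aux {β : Type*} [PartialOrder β] [LocallyFiniteOrder β] [DecidableEq β]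
    (f : α ↪o β) (hf : ∀ ⦃a b : α⦄ (z : β), f a ≤ z → z ≤ f b → ∃ w, f w = z)
    (a b : α) : mu ℤ (f a) (f b) = mu ℤ a b := by
  suffices H : ∀ n (b : α), (Icc a b).card ≤ n → mu ℤ (f a) (f b) = mu ℤ a b from
    H (Icc a b).card b le_rfl
  intro n
  induction n with
  | zero =>
    intro b hb
    have hab : ¬ a ≤ b := by
      intro hle
      have h1 : a ∈ Icc a b := mem_Icc.2 ⟨le_rfl, hle⟩
      have := card_pos.2 ⟨a, h1⟩
      omega
    rw [apply_eq_zero_of_not_le (fun hc => hab (f.le_iff_le.1 hc)) _,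
      apply_eq_zero_of_not_le hab]
  | succ n ih =>
    intro b hb
    rcases eq_or_ne a b with rfl | hne
    · simp
    by_cases hab : a ≤ b
    · have hfne : f a ≠ f b := fun hc => hne (f.injective hc)
      rw [mu_eq_neg_sum_Ico_of_ne hne, mu_eq_neg_sum_Ico_of_ne hfne]
      have himg : Ico (f a) (f b) = (Ico a b).image f := by
        ext z
        simp only [mem_Ico, mem_image]
        constructor
        · rintro ⟨h1, h2⟩
          obtain ⟨w, rfl⟩ := hf z h1 h2.le
          exact ⟨w, ⟨f.le_iff_le.1 h1, f.lt_iff_lt.1 h2⟩, rfl⟩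
        · rintro ⟨w, ⟨hw1, hw2⟩, rfl⟩
          exact ⟨f.le_iff_le.2 hw1, f.lt_iff_lt.2 hw2⟩
      rw [himg, sum_image (fun x _ y _ h => f.injective h)]
      congr 1
      apply sum_congr rfl
      intro w hw
      rw [mem_Ico] at hw
      refine ih w ?_
      have hsub : Icc a w ⊆ Icc a b := Icc_subset_Icc_right hw.2.le
      have hbn : b ∉ Icc a w := fun hc => (show w < b from hw.2).not_ge (mem_Icc.1 hc).2
      have : (Icc a w).card < (Icc a b).card :=
        card_lt_card ⟨hsub, fun hc => hbn (hc (mem_Icc.2 ⟨hab, le_rfl⟩))⟩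
      omega
    · rw [apply_eq_zero_of_not_le (fun hc => hab (f.le_iff_le.1 hc)) _,
        apply_eq_zero_of_not_le hab]

/-- Weisner's theorem, relative form: for `⊥ < b ≤ z`,
the sum of `μ(⊥, x)` over all `x` with `x ⊔ b = z` vanishes. -/
lemma weisner_aux {α : Type*} [Lattice α] [OrderBot α] [Fintype α] [DecidableEq α]
    [LocallyFiniteOrder α] {b : α} (hb : ⊥ < b) :
    ∀ z : α, b ≤ z → ∑ x ∈ univ.filter (fun x => x ⊔ b = z), mu ℤ ⊥ x = 0 := by
  classical
  intro z
  apply WellFoundedLT.induction z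
  intro z ih hbz
  have key : ∑ z' ∈ Icc b z, ∑ x ∈ univ.filter (fun x => x ⊔ b = z'), mu ℤ ⊥ x = 0 := by
    have hmaps : ∀ x ∈ univ.filter (fun x : α => x ⊔ b ≤ z), x ⊔ b ∈ Icc b z := by
      intro x hx
      rw [mem_filter] at hx
      exact mem_Icc.2 ⟨le_sup_right, hx.2⟩
    have hfib : ∀ z' ∈ Icc b z,
        (univ.filter (fun x : α => x ⊔ b ≤ z)).filter (fun x => x ⊔ b = z') =
        univ.filter (fun x => x ⊔ b = z') := by
      intro z' hz'
      rw [mem_Icc] at hz'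
      ext x
      simp only [mem_filter, mem_univ, true_and]
      exact ⟨fun h => h.2, fun h => ⟨h ▸ hz'.2, h⟩⟩
    have hstep : ∑ z' ∈ Icc b z, ∑ x ∈ univ.filter (fun x => x ⊔ b = z'), mu ℤ ⊥ x =
        ∑ x ∈ univ.filter (fun x : α => x ⊔ b ≤ z), mu ℤ ⊥ x := by
      rw [← sum_fiberwise_of_maps_to hmaps (fun x => mu ℤ ⊥ x)]
      exact sum_congr rfl fun z' hz' => by rw [hfib z' hz']
    rw [hstep]
    have hset : univ.filter (fun x : α => x ⊔ b ≤ z) = Icc ⊥ z := by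
      ext x
      simp only [mem_filter, mem_univ, true_and, mem_Icc, bot_le, sup_le_iff]
      exact ⟨fun h => h.1, fun h => ⟨h, hbz⟩⟩
    rw [hset, sum_Icc_mu_right]
    rw [if_neg (hb.trans_le hbz).ne]
  rw [Icc_eq_cons_Ico hbz, sum_cons] at key
  have hrest : ∑ z' ∈ Ico b z, ∑ x ∈ univ.filter (fun x => x ⊔ b = z'), mu ℤ ⊥ x = 0 := by
    apply sum_eq_zero
    intro z' hz'
    rw [mem_Ico] at hz'
    exact ih z' hz'.2 hz'.1
  rw [hrest, add_zero] at key
  exact key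

end General

section GroupLemmas

variable {H K : Type*} [Group H] [Group K]

private lemma map_snd_prod' (A : Subgroup H) (B : Subgroup K) :
    (A.prod B).map (MonoidHom.snd H K) = B := by
  ext k
  simp only [Subgroup.mem_map, Subgroup.mem_prod, MonoidHom.coe_snd]
  constructor
  · rintro ⟨⟨h', k'⟩, ⟨_, hk⟩, rfl⟩; exact hk
  · intro hk; exact ⟨(1, k), ⟨one_mem _, hk⟩, rfl⟩

private lemma map_fst_prod' (A : Subgroup H) (B : Subgroup K) :
    (A.prod B).map (MonoidHom.fst H K) = A := by
  ext a
  simp only [Subgroup.mem_map, Subgroup.mem_prod, MonoidHom.coe_fst]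
  constructor
  · rintro ⟨⟨h', k'⟩, ⟨ha, _⟩, rfl⟩; exact ha
  · intro ha; exact ⟨(a, 1), ⟨ha, one_mem _⟩, rfl⟩

/-- A subgroup of `H × K` containing `1 × K` is a product. -/
private lemma eq_prod_of_le {x : Subgroup (H × K)}
    (hx : (⊥ : Subgroup H).prod ⊤ ≤ x) :
    x = (x.map (MonoidHom.fst H K)).prod ⊤ := by
  ext ⟨a, k⟩
  simp only [Subgroup.mem_prod, Subgroup.mem_map, MonoidHom.coe_fst, Subgroup.mem_top, and_true]
  constructor
  · intro hm; exact ⟨(a, k), hm, rfl⟩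
  · rintro ⟨⟨a', k'⟩, hm, rfl⟩
    have h2 : ((1 : H), k' ⁻¹ * k) ∈ x := hx (by simp [Subgroup.mem_prod])
    have := mul_mem hm h2
    simpa using this
/-- A subgroup of `H × K` contained in `1 × K` is a product. -/
private lemma eq_prod_of_le' {x : Subgroup (H × K)}
    (hx : x ≤ (⊥ : Subgroup H).prod ⊤) :
    x = (⊥ : Subgroup H).prod (x.map (MonoidHom.snd H K)) := by
  ext ⟨a, k⟩
  simp only [Subgroup.mem_prod, Subgroup.mem_map, MonoidHom.coe_snd, Subgroup.mem_bot]
  constructor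
  · intro hm
    have := hx hm
    rw [Subgroup.mem_prod] at this
    exact ⟨this.1, ⟨(a, k), hm, rfl⟩⟩
  · rintro ⟨rfl, ⟨⟨a', k'⟩, hm, rfl⟩⟩
    have h1 := hx hm
    rw [Subgroup.mem_prod, Subgroup.mem_bot] at h1
    have ha : a' = 1 := h1.1
    rw [ha] at hm
    exact hm

/-- Key graph lemma: a subgroup mapping onto `K` and meeting `H × 1` trivially is `1 × K`. -/
private lemma graph_lemma
    (h : ∀ (N : Subgroup K) [N.Normal], N ≠ ⊤ →
      ∀ H' : Subgroup H, ¬ Nonempty ((K ⧸ N) ≃* H'))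
    {x : Subgroup (H × K)} (hsurj : x.map (MonoidHom.snd H K) = ⊤)
    (hmeet : x ⊓ (⊤ : Subgroup H).prod ⊥ = ⊥) :
    x = (⊥ : Subgroup H).prod ⊤ := by
  have huniq : ∀ (h₁ h₂ : H) (k : K), (h₁, k) ∈ x → (h₂, k) ∈ x → h₁ = h₂ := by
    intro h₁ h₂ k m1 m2
    have hmem : ((h₁, k) * (h₂, k)⁻¹) ∈ x ⊓ (⊤ : Subgroup H).prod ⊥ := by
      rw [Subgroup.mem_inf]
      refine ⟨mul_mem m1 (inv_mem m2), ?_⟩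
      rw [Subgroup.mem_prod]
      exact ⟨trivial, by simp⟩
    rw [hmeet, Subgroup.mem_bot] at hmem
    have h5 : h₁ * h₂⁻¹ = 1 := congrArg Prod.fst hmem
    exact mul_inv_eq_one.1 h5
  have hsur : ∀ k : K, ∃ hh : H, (hh, k) ∈ x := by
    intro k
    have : k ∈ x.map (MonoidHom.snd H K) := by rw [hsurj]; trivial
    obtain ⟨⟨h', k'⟩, hp, hpk⟩ := this
    exact ⟨h', by rwa [show k = k' from hpk.symm]⟩
  choose g hg using hsur
  let f : K →* H :=
    { toFun := g
      map_one' := huniq _ _ 1 (hg 1) (one_mem x)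
      map_mul' := fun k₁ k₂ => huniq _ _ _ (hg _) (by
        have := mul_mem (hg k₁) (hg k₂)
        exact this) }
  have hker : f.ker = ⊤ := by
    by_contra hne
    exact h f.ker hne f.range ⟨QuotientGroup.quotientKerEquivRange f⟩
  have hg1 : ∀ k, g k = 1 := by
    intro k
    have : k ∈ f.ker := by rw [hker]; trivial
    exact this
  ext ⟨a, k⟩
  simp only [Subgroup.mem_prod, Subgroup.mem_bot, Subgroup.mem_top, and_true]
  constructor
  · intro hm
    have := huniq a (g k) k hm (hg k)
    rw [hg1 k] at this
    exact this
  · intro ha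
    rw [ha]
    have := hg k
    rwa [hg1 k] at this

end GroupLemmas

section Main

open IncidenceAlgebra

variable {H K : Type*} [Group H] [Group K] [Finite H] [Finite K]
variable [Fintype (Subgroup (H × K))] [DecidableEq (Subgroup (H × K))]
  [LocallyFiniteOrder (Subgroup (H × K))]
  [Fintype (Subgroup H)] [DecidableEq (Subgroup H)] [LocallyFiniteOrder (Subgroup H)]
  [Fintype (Subgroup K)] [DecidableEq (Subgroup K)] [LocallyFiniteOrder (Subgroup K)]

/-- Vanishing lemma: if `x` maps onto `K` but doesn't contain `1 × K`, then `μ(⊥, x) = 0`. -/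
private lemma vanish_aux
    (h : ∀ (N : Subgroup K) [N.Normal], N ≠ ⊤ →
      ∀ H' : Subgroup H, ¬ Nonempty ((K ⧸ N) ≃* H')) :
    ∀ x : Subgroup (H × K), x.map (MonoidHom.snd H K) = ⊤ →
      ¬ ((⊥ : Subgroup H).prod ⊤ ≤ x) → mu ℤ ⊥ x = 0 := by
  intro x
  apply WellFoundedLT.induction x
  intro x ih hsurj hnle
  set b : Subgroup (H × K) := x ⊓ (⊤ : Subgroup H).prod ⊥ with hbdef
  have hb : ⊥ < b := by
    rcases eq_or_ne b ⊥ with hbe | hbe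
    · exfalso
      exact hnle (graph_lemma h hsurj hbe).ge
    · exact bot_lt_iff_ne_bot.2 hbe
  have hbx : b ≤ x := inf_le_left
  have hw := weisner_aux hb x hbx
  have hxmem : x ∈ univ.filter (fun y : Subgroup (H × K) => y ⊔ b = x) := by
    simp [sup_eq_left.2 hbx]
  have hzero : ∀ y ∈ univ.filter (fun y : Subgroup (H × K) => y ⊔ b = x), y ≠ x →
      mu ℤ ⊥ y = 0 := by
    intro y hy hne
    rw [mem_filter] at hy
    have hylex : y ≤ x := le_of_le_of_eq le_sup_left hy.2
    have hylt : y < x := lt_of_le_of_ne hylex hne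
    have hmapb : b.map (MonoidHom.snd H K) = ⊥ := by
      have h1 : b ≤ (⊤ : Subgroup H).prod ⊥ := inf_le_right
      have h2 := Subgroup.map_mono (f := MonoidHom.snd H K) h1
      rw [map_snd_prod'] at h2
      exact le_bot_iff.1 h2
    have hsurjy : y.map (MonoidHom.snd H K) = ⊤ := by
      have := congrArg (Subgroup.map (MonoidHom.snd H K)) hy.2
      rw [Subgroup.map_sup, hmapb, sup_bot_eq, hsurj] at this
      exact this
    exact ih y hylt hsurjy (fun hc => hnle (hc.trans hylex))
  have := Finset.sum_eq_single_of_mem x hxmem hzero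
  rw [hw] at this
  exact this.symm

/-- The order embedding of `Subgroup K` into `Subgroup (H × K)` via `B ↦ ⊥ × B`. -/
private lemma mu_bot_prod_top' :
    mu ℤ (⊥ : Subgroup (H × K)) ((⊥ : Subgroup H).prod ⊤) =
      mu ℤ (⊥ : Subgroup K) ⊤ := by
  have hemb : ∀ B₁ B₂ : Subgroup K,
      (⊥ : Subgroup H).prod B₁ ≤ (⊥ : Subgroup H).prod B₂ ↔ B₁ ≤ B₂ := by
    intro B₁ B₂
    constructor
    · intro hle k hk
      have : ((1 : H), k) ∈ (⊥ : Subgroup H).prod B₂ := hle (by simp [Subgroup.mem_prod, hk])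
      rw [Subgroup.mem_prod] at this
      exact this.2
    · intro hle
      exact Subgroup.prod_mono le_rfl hle
  let f : Subgroup K ↪o Subgroup (H × K) :=
    { toFun := fun B => (⊥ : Subgroup H).prod B
      inj' := fun B₁ B₂ hB => le_antisymm ((hemb _ _).1 hB.le) ((hemb _ _).1 hB.ge)
      map_rel_iff' := hemb _ _ }
  have hf : ∀ ⦃a b : Subgroup K⦄ (z : Subgroup (H × K)), f a ≤ z → z ≤ f b →
      ∃ w, f w = z := by
    intro a b z _ hzb
    refine ⟨z.map (MonoidHom.snd H K), ?_⟩
    exact (eq_prod_of_le' (hzb.trans (Subgroup.prod_mono le_rfl le_top))).symm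
  have := mu_orderEmbedding_aux f hf ⊥ ⊤
  have hfbot : f ⊥ = ⊥ := Subgroup.bot_prod_bot
  rw [hfbot] at this
  exact this

/-- Main induction: `μ(⊥, A × K) = μ_H(⊥, A) · μ_K(⊥, ⊤)`. -/
private lemma main_aux
    (h : ∀ (N : Subgroup K) [N.Normal], N ≠ ⊤ →
      ∀ H' : Subgroup H, ¬ Nonempty ((K ⧸ N) ≃* H')) :
    ∀ A : Subgroup H,
      mu ℤ (⊥ : Subgroup (H × K)) (A.prod ⊤) =
        mu ℤ (⊥ : Subgroup H) A * mu ℤ (⊥ : Subgroup K) ⊤ := by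
  classical
  intro A
  apply WellFoundedLT.induction A
  intro A ih
  rcases eq_or_ne A ⊥ with rfl | hAne
  · rw [mu_bot_prod_top', mu_self, one_mul]
  -- Weisner with b = A × 1, z = A × K
  have hbne : (A.prod ⊥ : Subgroup (H × K)) ≠ ⊥ := by
    rw [Ne, Subgroup.prod_eq_bot_iff]
    tauto
  have hb : (⊥ : Subgroup (H × K)) < A.prod ⊥ := bot_lt_iff_ne_bot.2 hbne
  have hbz : (A.prod ⊥ : Subgroup (H × K)) ≤ A.prod ⊤ := Subgroup.prod_mono le_rfl bot_le
  have hw := weisner_aux hb (A.prod ⊤) hbz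
  -- characterize the fiber
  have hfiber : ∀ x : Subgroup (H × K),
      x ⊔ A.prod ⊥ = A.prod ⊤ ↔ x ≤ A.prod ⊤ ∧ x.map (MonoidHom.snd H K) = ⊤ := by
    intro x
    constructor
    · intro hx
      refine ⟨le_of_le_of_eq le_sup_left hx, ?_⟩
      have := congrArg (Subgroup.map (MonoidHom.snd H K)) hx
      rw [Subgroup.map_sup, map_snd_prod', map_snd_prod', sup_bot_eq] at this
      exact this
    · rintro ⟨hle, hsurj⟩
      apply le_antisymm
      · exact sup_le hle hbz
      · rintro ⟨a, k⟩ hm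
        rw [Subgroup.mem_prod] at hm
        have hk : k ∈ x.map (MonoidHom.snd H K) := by rw [hsurj]; trivial
        obtain ⟨⟨h', k'⟩, hp, hpk⟩ := hk
        have hk' : k' = k := hpk
        rw [hk'] at hp
        have hh' : h' ∈ A := by
          have := hle hp
          rw [Subgroup.mem_prod] at this
          exact this.1
        have h1 : ((a * h'⁻¹ : H), (1 : K)) ∈ (A.prod ⊥ : Subgroup (H × K)) := by
          simp [Subgroup.mem_prod, mul_mem hm.1 (inv_mem hh')]
        have h2 : ((a * h'⁻¹, (1 : K)) * (h', k)) ∈ x ⊔ (A.prod ⊥ : Subgroup (H × K)) :=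
          mul_mem (le_sup_right (α := Subgroup (H × K)) h1) (le_sup_left (α := Subgroup (H × K)) hp)
        simpa using h2
  -- split the sum
  have hsplit : ∑ x ∈ univ.filter (fun x : Subgroup (H × K) => x ⊔ A.prod ⊥ = A.prod ⊤),
      mu ℤ ⊥ x = ∑ B ∈ Icc (⊥ : Subgroup H) A, mu ℤ (⊥ : Subgroup (H × K)) (B.prod ⊤) := by
    rw [← Finset.sum_filter_add_sum_filter_not _
      (fun x => (⊥ : Subgroup H).prod ⊤ ≤ x)]
    have hz : ∑ x ∈ (univ.filter (fun x : Subgroup (H × K) => x ⊔ A.prod ⊥ = A.prod ⊤)).filter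
        (fun x => ¬ ((⊥ : Subgroup H).prod ⊤ ≤ x)), mu ℤ ⊥ x = 0 := by
      apply sum_eq_zero
      intro x hx
      rw [mem_filter, mem_filter] at hx
      exact vanish_aux h x ((hfiber x).1 hx.1.2).2 hx.2
    rw [hz, add_zero]
    apply Finset.sum_nbij' (fun x => x.map (MonoidHom.fst H K)) (fun B => B.prod ⊤)
    · intro x hx
      simp only [mem_filter, mem_univ, true_and] at hx
      have hle := ((hfiber x).1 hx.1).1
      rw [mem_Icc]
      refine ⟨bot_le, ?_⟩
      have := Subgroup.map_mono (f := MonoidHom.fst H K) hle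
      rwa [map_fst_prod'] at this
    · intro B hB
      rw [mem_Icc] at hB
      simp only [mem_filter, mem_univ, true_and]
      constructor
      · rw [hfiber]
        exact ⟨Subgroup.prod_mono hB.2 le_rfl, map_snd_prod' _ _⟩
      · exact Subgroup.prod_mono bot_le le_rfl
    · intro x hx
      simp only [mem_filter, mem_univ, true_and] at hx
      exact (eq_prod_of_le hx.2).symm
    · intro B hB
      exact map_fst_prod' _ _
    · intro x hx
      simp only [mem_filter, mem_univ, true_and] at hx
      rw [← eq_prod_of_le hx.2]
  rw [hsplit] at hw
  rw [Icc_eq_cons_Ico bot_le, sum_cons] at hw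
  have hmain : mu ℤ (⊥ : Subgroup (H × K)) (A.prod ⊤) =
      -∑ B ∈ Ico (⊥ : Subgroup H) A, mu ℤ (⊥ : Subgroup (H × K)) (B.prod ⊤) := by
    linarith [hw]
  rw [hmain]
  have hIH : ∀ B ∈ Ico (⊥ : Subgroup H) A,
      mu ℤ (⊥ : Subgroup (H × K)) (B.prod ⊤) =
        mu ℤ (⊥ : Subgroup H) B * mu ℤ (⊥ : Subgroup K) ⊤ := by
    intro B hB
    rw [mem_Ico] at hB
    exact ih B hB.2
  rw [sum_congr rfl hIH, ← Finset.sum_mul, ← neg_mul,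
    ← mu_eq_neg_sum_Ico_of_ne (Ne.symm hAne)]

end Main



/-- If `K` has no nontrivial homomorphic image isomorphic to a subgroup of `H`,
then `μ(H × K) = μ(H) · μ(K)`. -/
theorem muGrp_prod_of_no_common_image {H K : Type*} [Group H] [Group K]
    [Finite H] [Finite K]
    (h : ∀ (N : Subgroup K) [N.Normal], N ≠ ⊤ →
      ∀ H' : Subgroup H, ¬ Nonempty ((K ⧸ N) ≃* H')) :
    muGrp (H × K) = muGrp H * muGrp K := by
  letI : Fintype (Subgroup (H × K)) := Fintype.ofFinite _
  letI : DecidableEq (Subgroup (H × K)) := Classical.decEq _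
  letI : @DecidableRel (Subgroup (H × K)) (Subgroup (H × K)) (· < ·) := Classical.decRel _
  letI : @DecidableRel (Subgroup (H × K)) (Subgroup (H × K)) (· ≤ ·) := Classical.decRel _
  letI := Fintype.toLocallyFiniteOrder (α := Subgroup (H × K))
  letI : Fintype (Subgroup H) := Fintype.ofFinite _
  letI : DecidableEq (Subgroup H) := Classical.decEq _
  letI : @DecidableRel (Subgroup H) (Subgroup H) (· < ·) := Classical.decRel _
  letI : @DecidableRel (Subgroup H) (Subgroup H) (· ≤ ·) := Classical.decRel _
  letI := Fintype.toLocallyFiniteOrder (α := Subgroup H)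
  letI : Fintype (Subgroup K) := Fintype.ofFinite _
  letI : DecidableEq (Subgroup K) := Classical.decEq _
  letI : @DecidableRel (Subgroup K) (Subgroup K) (· < ·) := Classical.decRel _
  letI : @DecidableRel (Subgroup K) (Subgroup K) (· ≤ ·) := Classical.decRel _
  letI := Fintype.toLocallyFiniteOrder (α := Subgroup K)
  have hmain := main_aux h (⊤ : Subgroup H)
  rw [Subgroup.top_prod_top] at hmain
  show subgroupMu (H × K) ⊥ ⊤ = subgroupMu H ⊥ ⊤ * subgroupMu K ⊥ ⊤
  unfold subgroupMu
  convert hmain using 3 <;> exact Subsingleton.elim _ _
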